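/- Let n, r, t be integers with r ≥ 1, n ≥ 2r, n ≥ 32, and 0 ≤ t ≤ 2r − 2, and set k_t := (t+1)·r − ⌊(t+1)/2⌋ · ⌈(t+1)/2⌉ and ∂_{k_t} := t·n + r − 1 − ⌊(t+1)/2⌋. If k_t ≤ 0.33·r², then n² − ∂_{k_t} ≥ 0.9 · ( ⌈√(r² − k_t + 1)⌉ + n − r )². (Consequently, the minimum distance of the code C_{k_t} from the paper's construction is at least 90% of the upper bound ( ⌈√(r² − k_t + 1)⌉ + n − r )².) -/

import Mathlib

set_option maxHeartbeats 1000000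


/-- Let `r ≥ 1`, `n ≥ 2r`, `n ≥ 32`, `0 ≤ t ≤ 2r−2` be integers, and
set `k_t := (t+1)·r − ⌊(t+1)/2⌋·⌈(t+1)/2⌉` and `∂_{k_t} := t·n + r − 1 − ⌊(t+1)/2⌋`
(natural-number arithmetic; note `⌈(t+1)/2⌉ = (t+2)/2`).  If `k_t ≤ 0.33·r²`, then
`n² − ∂_{k_t} ≥ 0.9·(⌈√(r² − k_t + 1)⌉ + n − r)²`, as real numbers. -/
theorem stmt_16 (n r t : ℕ) (h1 : 1 ≤ r) (hn2r : 2 * r ≤ n) (hn32 : 32 ≤ n)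
    (ht : t ≤ 2 * r - 2)
    (kt : ℕ) (hkt : kt = (t + 1) * r - ((t + 1) / 2) * ((t + 2) / 2))
    (dkt : ℕ) (hdkt : dkt = t * n + r - 1 - (t + 1) / 2)
    (hsmall : (kt : ℝ) ≤ 0.33 * (r : ℝ) ^ 2) :
    (n : ℝ) ^ 2 - (dkt : ℝ) ≥
      0.9 * ((⌈Real.sqrt ((r : ℝ) ^ 2 - (kt : ℝ) + 1)⌉ : ℝ) + (n : ℝ) - (r : ℝ)) ^ 2 := by
  have har : (t + 1) / 2 + 1 ≤ r := by omega
  have ha1 : t ≤ 2 * ((t + 1) / 2) := by omega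
  have ha2 : 2 * ((t + 1) / 2) ≤ t + 1 := by omega
  have ht' : t + 2 ≤ 2 * r := by omega
  set A : ℝ := (((t + 1) / 2 : ℕ) : ℝ) with hAdef
  have hA1 : (t : ℝ) ≤ 2 * A := by rw [hAdef]; exact_mod_cast ha1
  have hA2 : 2 * A ≤ (t : ℝ) + 1 := by rw [hAdef]; exact_mod_cast ha2
  have hAr : A + 1 ≤ (r : ℝ) := by rw [hAdef]; exact_mod_cast har
  have hR1 : (1 : ℝ) ≤ (r : ℝ) := by exact_mod_cast h1
  have hN2R : 2 * (r : ℝ) ≤ (n : ℝ) := by exact_mod_cast hn2r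
  have hN32 : (32 : ℝ) ≤ (n : ℝ) := by exact_mod_cast hn32
  have hT' : (t : ℝ) + 2 ≤ 2 * (r : ℝ) := by exact_mod_cast ht'
  have hT0 : (0 : ℝ) ≤ (t : ℝ) := Nat.cast_nonneg t
  -- cast kt
  have hkt2 : kt + ((t + 1) / 2) * (t + 1 - (t + 1) / 2) = (t + 1) * r := by
    have e : (t + 2) / 2 = t + 1 - (t + 1) / 2 := by omega
    have hle : ((t + 1) / 2) * (t + 1 - (t + 1) / 2) ≤ (t + 1) * r := by
      calc ((t + 1) / 2) * (t + 1 - (t + 1) / 2) ≤ r * (t + 1) :=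
            Nat.mul_le_mul (by omega) (by omega)
        _ = (t + 1) * r := Nat.mul_comm _ _
    rw [hkt, e]
    exact Nat.sub_add_cancel hle
  have hK : (kt : ℝ) = ((t : ℝ) + 1) * r - A * ((t : ℝ) + 1 - A) := by
    have hcast := congrArg (Nat.cast : ℕ → ℝ) hkt2
    push_cast [Nat.cast_sub (show (t + 1) / 2 ≤ t + 1 by omega)] at hcast
    linarith
  -- cast dkt
  obtain ⟨m, hm⟩ : ∃ m, t * n = m := ⟨_, rfl⟩
  rw [hm] at hdkt
  have hd2 : dkt + 1 + (t + 1) / 2 = m + r := by omega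
  have hD : (dkt : ℝ) = (t : ℝ) * n + r - 1 - A := by
    have hc := congrArg (Nat.cast : ℕ → ℝ) hd2
    push_cast at hc
    have hmr : ((m : ℕ) : ℝ) = (t : ℝ) * n := by exact_mod_cast (congrArg (Nat.cast : ℕ → ℝ) hm).symm
    linarith
  rw [hK] at hsmall
  -- bound t+1 ≤ 0.363 r
  have hx : (t : ℝ) + 1 ≤ 0.363 * r := by
    nlinarith [sq_nonneg ((t : ℝ) + 1 - 2 * A), sq_nonneg (2 * (r : ℝ) - (t : ℝ) - 1),
      mul_pos (show (0:ℝ) < 2 * (r:ℝ) - (t:ℝ) - 1 by linarith)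
        (show (0:ℝ) < (r:ℝ) by linarith), hsmall]
  -- sqrt bound
  have hb : (r : ℝ) ^ 2 - (kt : ℝ) + 1 ≤ ((r : ℝ) - ((t : ℝ) + 1) / 2 + 1 / 2) ^ 2 := by
    rw [hK]
    nlinarith [sq_nonneg ((t : ℝ) + 1 - 2 * A), hx, hR1]
  have hbpos : (0 : ℝ) ≤ (r : ℝ) - ((t : ℝ) + 1) / 2 + 1 / 2 := by nlinarith [hx, hR1]
  have hsqrt : Real.sqrt ((r : ℝ) ^ 2 - (kt : ℝ) + 1) ≤ (r : ℝ) - ((t : ℝ) + 1) / 2 + 1 / 2 := by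
    calc Real.sqrt ((r : ℝ) ^ 2 - (kt : ℝ) + 1)
        ≤ Real.sqrt (((r : ℝ) - ((t : ℝ) + 1) / 2 + 1 / 2) ^ 2) := Real.sqrt_le_sqrt hb
      _ = (r : ℝ) - ((t : ℝ) + 1) / 2 + 1 / 2 := Real.sqrt_sq hbpos
  set S : ℝ := ((⌈Real.sqrt ((r : ℝ) ^ 2 - (kt : ℝ) + 1)⌉ : ℤ) : ℝ) with hSdef
  have hSle : S ≤ (r : ℝ) - ((t : ℝ) + 1) / 2 + 3 / 2 := by
    have h := Int.ceil_lt_add_one (Real.sqrt ((r : ℝ) ^ 2 - (kt : ℝ) + 1))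
    linarith [h, hsqrt]
  have hS0 : (0 : ℝ) ≤ S :=
    Int.cast_nonneg_iff.mpr (Int.ceil_nonneg (Real.sqrt_nonneg _))
  have hRN : (r : ℝ) ≤ (n : ℝ) := by linarith
  have h2 : (S + (n : ℝ) - (r : ℝ)) ^ 2 ≤ ((n : ℝ) - ((t : ℝ) + 1) / 2 + 3 / 2) ^ 2 := by
    have h0 : (0 : ℝ) ≤ S + (n : ℝ) - (r : ℝ) := by linarith
    have hle : S + (n : ℝ) - (r : ℝ) ≤ (n : ℝ) - ((t : ℝ) + 1) / 2 + 3 / 2 := by linarith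
    nlinarith [h0, hle]
  -- final
  have hc : (t : ℝ) + 1 ≤ 0.1815 * (n : ℝ) := by linarith
  have hc' : (0 : ℝ) ≤ 0.1815 * (n : ℝ) - 1 - (t : ℝ) := by linarith
  have hN0 : (0 : ℝ) ≤ (n : ℝ) := by linarith
  rw [hD]
  nlinarith [h2, mul_nonneg hc' hN0, mul_nonneg hc' hT0,
    mul_nonneg (show (0:ℝ) ≤ (n:ℝ) - 32 by linarith) hN0, hA1, hR1, hN2R]
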